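/- Let $\pi$ be an overpartition in $\overline{\mathcal{B}}_0(\alpha_1,\ldots,\alpha_\lambda;\eta,k,r)$ where $k-1 > \lambda$. Then $g(\pi) \geq \overline{\eta}$, i.e., every part starting a $(k-1)$-band of $\pi$ has size at least $\eta$; moreover, if the smallest overlined part of $\pi$ divisible by $\eta$ exceeds $\overline{\eta}$ (or no such part exists), then $g(\pi) \geq \eta$, i.e., any part starting a $(k-1)$-band is at least the non-overlined part $\eta$ in the ordering $\bar{1}<1<\bar{2}<2<\cdots$. -/

import Mathlib

/-- A part of an overpartition: a size together with a flag telling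
whether the part is overlined. -/
structure OPart where
  size : ℕ
  ovl : Bool
deriving DecidableEq

/-- The value of a part in the ordering `1̄ < 1 < 2̄ < 2 < ⋯`:
an overlined part of size `t` has value `2t - 1`, a non-overlined one `2t`. -/
def OPart.val (p : OPart) : ℕ := 2 * p.size - (if p.ovl then 1 else 0)

def dpart : OPart := ⟨0, false⟩

/-- value of the `i`-th part (0-based). -/
def pval (π : List OPart) (i : ℕ) : ℕ := (π.getD i dpart).val

def pover (π : List OPart) (i : ℕ) : Bool := (π.getD i dpart).ovl

def psize (π : List OPart) (i : ℕ) : ℕ := (π.getD i dpart).size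

/-- the weight `|π|`: the sum of the sizes of the parts. -/
def wt (π : List OPart) : ℕ := (π.map OPart.size).sum

/-- An overpartition: a sequence of positive parts, non-increasing in the
ordering `1̄ < 1 < 2̄ < 2 < ⋯`, in which each size is overlined at most once
(the overlined copy, being smallest among equal sizes, is the last occurrence). -/
def IsOverPartition (π : List OPart) : Prop :=
  List.Pairwise (fun p q : OPart => q.val ≤ p.val) π ∧
  (∀ p ∈ π, 0 < p.size) ∧
  (∀ t : ℕ, π.count (⟨t, true⟩ : OPart) ≤ 1)

/-- `{π_{i+l}}_{0 ≤ l ≤ m-1}` is an `m`-band of `π`: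
`π_i ≤ π_{i+m-1} + η`, with strict inequality if `π_i` is overlined. -/
def IsBand (η : ℕ) (π : List OPart) (m i : ℕ) : Prop :=
  i + m ≤ π.length ∧
  pval π i ≤ pval π (i + m - 1) + 2 * η ∧
  (pover π i = true → pval π i < pval π (i + m - 1) + 2 * η)

/-- `V̄_π(N)`: the number of overlined parts of value at most `N`
whose size is not divisible by `η`. -/
def Vbar (η : ℕ) (π : List OPart) (N : ℕ) : ℕ :=
  π.countP (fun p => p.ovl && decide (p.val ≤ N) && !(decide (p.size % η = 0)))

/-- `Ō_π(N)`: the number of overlined parts of value at least `N`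
whose size is divisible by `η`. -/
def Obar (η : ℕ) (π : List OPart) (N : ℕ) : ℕ :=
  π.countP (fun p => p.ovl && decide (N ≤ p.val) && decide (p.size % η = 0))

/-- `f_{≤η}(π)`: the number of parts not exceeding `η`. -/
def fLe (η : ℕ) (π : List OPart) : ℕ :=
  π.countP (fun p => decide (p.val ≤ 2 * η))

/-- `[|π_i|/η] + ⋯ + [|π_{i+m-1}|/η]`. -/
def bandSum (η : ℕ) (π : List OPart) (i m : ℕ) : ℕ :=
  ∑ l ∈ Finset.range m, psize π (i + l) / η

/-- Every part is congruent to `0, α_1, …, α_λ` modulo `η`. -/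
def CongParts (α : ℕ → ℕ) (lam η : ℕ) (π : List OPart) : Prop :=
  ∀ p ∈ π, p.size % η = 0 ∨ ∃ s, 1 ≤ s ∧ s ≤ lam ∧ p.size % η = α s

/-- The class `B̄(α_1,…,α_λ; η, k, r)`: conditions (1)–(4) of the definition
of `B̄₀`. -/
def InBbar (α : ℕ → ℕ) (lam η k r : ℕ) (π : List OPart) : Prop :=
  IsOverPartition π ∧
  CongParts α lam η π ∧
  (∀ p ∈ π, p.ovl = false → η ∣ p.size) ∧
  (∀ i, i + k ≤ π.length →
    pval π (i + k - 1) + 2 * η ≤ pval π i ∧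
    (pover π i = false → pval π (i + k - 1) + 2 * η < pval π i)) ∧
  fLe η π ≤ r

/-- An `m`-band at `i` is even:
`[|π_i|/η]+⋯+[|π_{i+m-1}|/η] ≡ r - 1 + V̄_π(π_i) + Ō_π(π_{i+m-1}) (mod 2)`. -/
def EvenBand (η r : ℕ) (π : List OPart) (m i : ℕ) : Prop :=
  Int.ModEq 2 (bandSum η π i m)
    ((r : ℤ) - 1 + (Vbar η π (pval π i) : ℤ) + (Obar η π (pval π (i + m - 1)) : ℤ))

/-- Condition (5) of the definition of `B̄₀`. -/
def Cond5 (η k r : ℕ) (π : List OPart) : Prop :=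
  fLe η π = r → (⟨η, true⟩ : OPart) ∉ π →
    ∃ i, IsBand η π (k - 1) i ∧ pval π i < 2 * (2 * η) - 1

/-- The class `B̄₀(α_1,…,α_λ; η, k, r)`: conditions (1)–(6). -/
def InB0 (α : ℕ → ℕ) (lam η k r : ℕ) (π : List OPart) : Prop :=
  InBbar α lam η k r π ∧ Cond5 η k r π ∧
  ∀ i, IsBand η π (k - 1) i → EvenBand η r π (k - 1) i

/-- `s(π) > t̄η`: every overlined part divisible by `η` has size `> tη`. -/
def SGt (η t : ℕ) (π : List OPart) : Prop :=
  ∀ p ∈ π, p.ovl = true → η ∣ p.size → t * η < p.size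

/-- `s(π) = t̄η`. -/
def SEq (η t : ℕ) (π : List OPart) : Prop :=
  (⟨t * η, true⟩ : OPart) ∈ π ∧
  ∀ p ∈ π, p.ovl = true → η ∣ p.size → t * η ≤ p.size

/-- `g(π) ≥ x` (value `x`): every part starting a `(k-1)`-band has value `≥ x`. -/
def GGe (η k : ℕ) (π : List OPart) (x : ℕ) : Prop :=
  ∀ i, IsBand η π (k - 1) i → x ≤ pval π i

/-- `g(π) < x`: some part starting a `(k-1)`-band has value `< x`. -/
def GLt (η k : ℕ) (π : List OPart) (x : ℕ) : Prop :=
  ∃ i, IsBand η π (k - 1) i ∧ pval π i < x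

/-- `π ∈ B̄₀^=(α_1,…,α_λ; η,k,r | t)`. -/
def InBeq (α : ℕ → ℕ) (lam η k r t : ℕ) (π : List OPart) : Prop :=
  InB0 α lam η k r π ∧
  ((SEq η t π ∧ GGe η k π (2 * (t * η) - 1)) ∨
   (SGt η t π ∧ GGe η k π (2 * (t * η)) ∧ GLt η k π (2 * ((t + 1) * η) - 1)))

/-- `π ∈ B̄₀^>(α_1,…,α_λ; η,k,r | t)`. -/
def InBgt (α : ℕ → ℕ) (lam η k r t : ℕ) (π : List OPart) : Prop :=
  InB0 α lam η k r π ∧ SGt η t π ∧ GGe η k π (2 * ((t + 1) * η) - 1)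

/-- An `m`-band belonging to the closed interval `[(t-1)η, (t+1)η]`. -/
def BandInC (η t : ℕ) (π : List OPart) (m i : ℕ) : Prop :=
  IsBand η π m i ∧ 2 * ((t - 1) * η) ≤ pval π (i + m - 1) ∧
  pval π i ≤ 2 * ((t + 1) * η)

/-- An `m`-band belonging to `[(t-1)η, \overline{(t+1)η})`. -/
def BandInO (η t : ℕ) (π : List OPart) (m i : ℕ) : Prop :=
  IsBand η π m i ∧ 2 * ((t - 1) * η) ≤ pval π (i + m - 1) ∧
  pval π i < 2 * ((t + 1) * η) - 1

/-- An `m`-band at `i` is of type N. -/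
def TypeN (η r t : ℕ) (π : List OPart) (m i : ℕ) : Prop :=
  Int.ModEq 2 (bandSum η π i m)
    ((t : ℤ) + (r : ℤ) - 1 + (Vbar η π (pval π i) : ℤ) +
      (Obar η π (pval π (i + m - 1)) : ℤ))

/-- `π` is obtained from `μ` by inserting the part `p`. -/
def InsertPart (μ : List OPart) (p : OPart) (π : List OPart) : Prop :=
  ∃ l1 l2, μ = l1 ++ l2 ∧ π = l1 ++ p :: l2

/-- The `(k-1)`-reduction `D_t` as a relation: `μ = D_t(π)`. -/
def DtRel (η t : ℕ) (π μ : List OPart) : Prop :=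
  ((⟨t * η, true⟩ : OPart) ∈ π ∧ InsertPart μ ⟨t * η, true⟩ π) ∨
  ((⟨t * η, true⟩ : OPart) ∉ π ∧ InsertPart μ ⟨t * η, false⟩ π)

/-- `μ` has a `(k-2)`-band belonging to `[(t-1)η, \overline{(t+1)η})` of type N. -/
def HasTypeNBand (η r k t : ℕ) (μ : List OPart) : Prop :=
  ∃ i, BandInO η t μ (k - 2) i ∧ TypeN η r t μ (k - 2) i

/-- The `(k-1)`-augmentation `C_t` as a relation: `π = C_t(μ)`. -/
def CtRel (η r k t : ℕ) (μ π : List OPart) : Prop :=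
  (HasTypeNBand η r k t μ ∧ InsertPart μ ⟨t * η, false⟩ π) ∨
  (¬ HasTypeNBand η r k t μ ∧ InsertPart μ ⟨t * η, true⟩ π)

/-- `B₁`-type overpartitions: conditions (1)–(4), no overlined part divisible
by `η`, and at most `r - 1` parts not exceeding `η`. -/
def InB1over (α : ℕ → ℕ) (lam η k r : ℕ) (π : List OPart) : Prop :=
  InBbar α lam η k r π ∧ (∀ p ∈ π, p.ovl = true → ¬ η ∣ p.size) ∧ fLe η π < r

/-- `D_η`: partitions into distinct parts divisible by `η`. -/
def InD (η : ℕ) (τ : List ℕ) : Prop :=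
  List.Pairwise (· > ·) τ ∧ ∀ x ∈ τ, 0 < x ∧ η ∣ x

/-- Bressoud's class `B₁(α_1,…,α_λ; η,k,r)` of ordinary partitions. -/
def InB1nat (α : ℕ → ℕ) (lam η k r : ℕ) (σ : List ℕ) : Prop :=
  List.Pairwise (· ≥ ·) σ ∧ (∀ x ∈ σ, 0 < x) ∧
  (∀ x ∈ σ, x % η = 0 ∨ ∃ s, 1 ≤ s ∧ s ≤ lam ∧ x % η = α s) ∧
  (∀ x : ℕ, ¬ η ∣ x → σ.count x ≤ 1) ∧
  (∀ i, i + k ≤ σ.length →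
    σ.getD (i + k - 1) 0 + η ≤ σ.getD i 0 ∧
    (η ∣ σ.getD i 0 → σ.getD (i + k - 1) 0 + η < σ.getD i 0)) ∧
  σ.countP (fun x => decide (x ≤ η)) < r

/-- The class `Ā₀(α_1,…,α_λ; η,k,r)`. Congruence conditions involving `η/2`
are stated with sizes doubled. -/
def InA0 (α : ℕ → ℕ) (lam η k r : ℕ) (π : List OPart) : Prop :=
  IsOverPartition π ∧
  CongParts α lam η π ∧
  (Even lam →
    ∀ p ∈ π, p.ovl = false →
      η ∣ p.size ∧
      ¬ (2 * η * (2 * k - lam - 1) ∣ 2 * p.size) ∧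
      2 * p.size % (2 * η * (2 * k - lam - 1)) ≠ η * (2 * r - lam) ∧
      2 * p.size % (2 * η * (2 * k - lam - 1)) ≠
        2 * η * (2 * k - lam - 1) - η * (2 * r - lam)) ∧
  (¬ Even lam →
    (∀ p ∈ π, p.ovl = false →
      η ∣ 2 * p.size ∧
      p.size % (2 * η) ≠ η ∧
      ¬ (2 * η * (2 * k - lam - 1) ∣ 2 * p.size) ∧
      2 * p.size % (2 * η * (2 * k - lam - 1)) ≠ η * (2 * r - lam) ∧
      2 * p.size % (2 * η * (2 * k - lam - 1)) ≠
        2 * η * (2 * k - lam - 1) - η * (2 * r - lam)) ∧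
    (∀ p ∈ π, p.ovl = true → 2 * p.size % (2 * η) ≠ η))

lemma two_le_count_aux {l : List OPart} {a b : ℕ} {p : OPart} (hab : a < b) (hb : b < l.length)
    (ha' : l[a]'(lt_trans hab hb) = p) (hb' : l[b]'hb = p) : 2 ≤ l.count p := by
  have h1 : p ∈ l.take b := by
    have hlt : a < (l.take b).length := by rw [List.length_take]; omega
    have he : (l.take b)[a]'hlt = p := by rw [List.getElem_take]; exact ha'
    rw [← he]; exact List.getElem_mem _
  have h2 : p ∈ l.drop b := by
    have hlt : 0 < (l.drop b).length := by rw [List.length_drop]; omega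
    have he : (l.drop b)[0]'hlt = p := by rw [List.getElem_drop]; simpa using hb'
    rw [← he]; exact List.getElem_mem _
  have c1 := List.count_pos_iff.mpr h1
  have c2 := List.count_pos_iff.mpr h2
  have hc : l.count p = (l.take b).count p + (l.drop b).count p := by
    rw [← List.count_append, List.take_append_drop]
  omega

lemma opart_eq_mk {p : OPart} {t : ℕ} {b : Bool} (h1 : p.size = t) (h2 : p.ovl = b) :
    p = ⟨t, b⟩ := by cases p; simp_all

lemma no_small_band (α : ℕ → ℕ) (lam η k : ℕ) (hη : 0 < η)
    (hαr : ∀ s, 1 ≤ s → s ≤ lam → α s < η)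
    (hlk : lam + 1 < k) (π : List OPart)
    (hop : IsOverPartition π) (hcong : CongParts α lam η π)
    (hov : ∀ p ∈ π, p.ovl = false → η ∣ p.size)
    (i : ℕ) (hlen : i + (k - 1) ≤ π.length)
    (hsmall : pval π i ≤ 2 * η - 2) : False := by
  obtain ⟨hsort, hpos, hcount⟩ := hop
  have hk1 : 1 ≤ k - 1 := by omega
  have hi : i < π.length := by omega
  have hpi : pval π i = (π[i]'hi).val := by
    unfold pval; rw [List.getD_eq_getElem]
  have hidx : ∀ l, l < k - 1 → i + l < π.length := fun l hl => by omega
  have hval : ∀ l (hl : l < k - 1), (π[i + l]'(hidx l hl)).val ≤ pval π i := by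
    intro l hl
    rcases Nat.eq_zero_or_pos l with h0 | h0
    · subst h0; rw [hpi]; simp
    · rw [hpi]
      exact hsort.rel_get_of_lt (a := ⟨i, hi⟩) (b := ⟨i + l, hidx l hl⟩) (by simp; omega)
  have hsz : ∀ l (hl : l < k - 1),
      (π[i + l]'(hidx l hl)).ovl = true ∧
      ∃ s, 1 ≤ s ∧ s ≤ lam ∧ (π[i + l]'(hidx l hl)).size = α s := by
    intro l hl
    set p := π[i + l]'(hidx l hl) with hp
    have hmem : p ∈ π := List.getElem_mem _
    have hppos : 0 < p.size := hpos p hmem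
    have hvle := hval l hl
    rw [← hp] at hvle
    have hvdef : p.val = 2 * p.size - (if p.ovl then 1 else 0) := rfl
    have hvlt : p.size < η := by
      rcases hb : p.ovl <;> rw [hb] at hvdef <;> simp at hvdef <;> omega
    have hmod : p.size % η = p.size := Nat.mod_eq_of_lt hvlt
    have hover : p.ovl = true := by
      by_contra h
      have hdvd := hov p hmem (by simpa using h)
      have := Nat.le_of_dvd hppos hdvd
      omega
    refine ⟨hover, ?_⟩
    rcases hcong p hmem with h0 | ⟨s, hs1, hs2, hs3⟩
    · omega
    · exact ⟨s, hs1, hs2, by omega⟩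
  have hps : ∀ l (hl : l < k - 1), psize π (i + l) = (π[i + l]'(hidx l hl)).size := by
    intro l hl; unfold psize; rw [List.getD_eq_getElem]
  have hmaps : ∀ l ∈ Finset.range (k - 1),
      psize π (i + l) ∈ Finset.image α (Finset.Icc 1 lam) := by
    intro l hl
    have hl' := Finset.mem_range.mp hl
    obtain ⟨_, s, hs1, hs2, hs3⟩ := hsz l hl'
    rw [hps l hl']
    exact Finset.mem_image.mpr ⟨s, Finset.mem_Icc.mpr ⟨hs1, hs2⟩, hs3.symm⟩
  have hcard : (Finset.image α (Finset.Icc 1 lam)).card < (Finset.range (k - 1)).card := by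
    rw [Finset.card_range]
    calc (Finset.image α (Finset.Icc 1 lam)).card ≤ (Finset.Icc 1 lam).card :=
          Finset.card_image_le
      _ = lam := by rw [Nat.card_Icc]; omega
      _ < k - 1 := by omega
  obtain ⟨a, ha, b, hb, hab, hfab⟩ :=
    Finset.exists_ne_map_eq_of_card_lt_of_maps_to hcard hmaps
  have ha' := Finset.mem_range.mp ha
  have hb' := Finset.mem_range.mp hb
  rw [hps a ha', hps b hb'] at hfab
  obtain ⟨hova, _⟩ := hsz a ha'
  obtain ⟨hovb, _⟩ := hsz b hb'
  have hcnt := hcount ((π[i + a]'(hidx a ha')).size)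
  have ea : (π[i + a]'(hidx a ha')) = ⟨(π[i + a]'(hidx a ha')).size, true⟩ :=
    opart_eq_mk rfl hova
  have eb : (π[i + b]'(hidx b hb')) = ⟨(π[i + a]'(hidx a ha')).size, true⟩ :=
    opart_eq_mk hfab.symm hovb
  rcases hab.lt_or_gt with hlt | hlt
  · have h2 := two_le_count_aux (l := π) (a := i + a) (b := i + b)
      (by omega) (hidx b hb') ea eb
    omega
  · have h2 := two_le_count_aux (l := π) (a := i + b) (b := i + a)
      (by omega) (hidx a ha') eb ea
    omega

theorem stmt_16 (α : ℕ → ℕ) (lam η k r : ℕ)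
    (hη : 0 < η)
    (hαpos : ∀ i, 1 ≤ i → i ≤ lam → 0 < α i ∧ α i < η)
    (hαmono : ∀ i j, 1 ≤ i → i < j → j ≤ lam → α i < α j)
    (hαsym : ∀ i, 1 ≤ i → i ≤ lam → α i = η - α (lam + 1 - i))
    (hrk : r < k) (hlr : lam ≤ r) (hlk : lam + 1 < k)
    (π : List OPart) (hπ : InB0 α lam η k r π) :
    GGe η k π (2 * η - 1) ∧ (SGt η 1 π → GGe η k π (2 * η)) :=  by
  obtain ⟨⟨hop, hcong, hov, _, _⟩, _, _⟩ := hπ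
  have hαr : ∀ s, 1 ≤ s → s ≤ lam → α s < η := fun s h1 h2 => (hαpos s h1 h2).2
  have part1 : GGe η k π (2 * η - 1) := by
    intro i hband
    by_contra h
    push_neg at h
    exact no_small_band α lam η k hη hαr hlk π hop hcong hov i hband.1 (by omega)
  refine ⟨part1, ?_⟩
  intro hs i hband
  by_contra h
  push_neg at h
  have h1 := part1 i hband
  have heq : pval π i = 2 * η - 1 := by omega
  have hk1 : 1 ≤ k - 1 := by omega
  have hi : i < π.length := by have := hband.1; omega
  have hpi : pval π i = (π[i]'hi).val := by
    unfold pval; rw [List.getD_eq_getElem]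
  set p := π[i]'hi with hp
  have hmem : p ∈ π := List.getElem_mem _
  have hppos : 0 < p.size := hop.2.1 p hmem
  have hvdef : p.val = 2 * p.size - (if p.ovl then 1 else 0) := rfl
  rcases hb : p.ovl with hfalse | htrue
  · rw [hb] at hvdef; simp at hvdef; omega
  · rw [hb] at hvdef; simp at hvdef
    have hsize : p.size = η := by omega
    have := hs p hmem hb (hsize ▸ dvd_refl η)
    omega
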